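/- Let μ > 1 and let z = (z₁, z₂) and z' = (z₁', z₂') be points of Ω̃ with φ̃(z) = φ̃(z'). Then there exists k ∈ ℤ such that z₁' = e^{2πμki} z₁ and z₂' = e^{πμk} z₂. -/

import Mathlib

open MeasureTheory

/-- `log^t(z)`: the branch of the logarithm of `z` whose imaginary part lies in
`[log t², log t² + 2π)`. -/
noncomputable def logT (t : ℝ) (z : ℂ) : ℂ :=
  Complex.log z +
    ((2 * Real.pi * (⌈(Real.log (t ^ 2) - (Complex.log z).im) / (2 * Real.pi)⌉ : ℤ) : ℝ) : ℂ) *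
      Complex.I

/-- `ρ̃(z) = |z₁ + e^{i log|z₂|²}|² - 1`. -/
noncomputable def rhoT (z : ℂ × ℂ) : ℝ :=
  ‖z.1 + Complex.exp (Complex.I * (Real.log (‖z.2‖ ^ 2) : ℂ))‖ ^ 2 - 1

/-- `Ω̃ = {z ∈ ℂ × (ℂ∖{0}) : ρ̃(z) < 0}`. -/
def OmegaT : Set (ℂ × ℂ) := {z | z.2 ≠ 0 ∧ rhoT z < 0}

/-- `φ̃(z) = (exp((log^{|z₂|}(z₁) - log 2)/μ), z₂ exp(½(π + i log^{|z₂|}(z₁))))`. -/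
noncomputable def phiT (μ : ℝ) (z : ℂ × ℂ) : ℂ × ℂ :=
  (Complex.exp ((logT ‖z.2‖ z.1 - (Real.log 2 : ℂ)) / (μ : ℂ)),
   z.2 * Complex.exp (((Real.pi : ℂ) + Complex.I * logT ‖z.2‖ z.1) / 2))

/-- The Reinhardt domain
`D_μ = {w ∈ ℂ² : 0 < |w₁| < 1 and |log |w₂|²| < arccos(|w₁|^μ)}`. -/
def Dset (μ : ℝ) : Set (ℂ × ℂ) :=
  {w | 0 < ‖w.1‖ ∧ ‖w.1‖ < 1 ∧
    |Real.log (‖w.2‖ ^ 2)| < Real.arccos (‖w.1‖ ^ μ)}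


lemma exp_logT {t : ℝ} {z : ℂ} (hz : z ≠ 0) : Complex.exp (logT t z) = z := by
  unfold logT
  rw [Complex.exp_add]
  have h1 : ((2 * Real.pi * (⌈(Real.log (t ^ 2) - (Complex.log z).im) / (2 * Real.pi)⌉ : ℤ) : ℝ) : ℂ) * Complex.I
      = (⌈(Real.log (t ^ 2) - (Complex.log z).im) / (2 * Real.pi)⌉ : ℤ) * (2 * (Real.pi : ℂ) * Complex.I) := by
    push_cast; ring
  rw [h1, Complex.exp_int_mul_two_pi_mul_I, mul_one, Complex.exp_log hz]

lemma fst_ne_zero_of_mem {z : ℂ × ℂ} (hz : z ∈ OmegaT) : z.1 ≠ 0 := by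
  intro h0
  have h2 := hz.2
  unfold rhoT at h2
  rw [h0, zero_add] at h2
  have habs : ‖Complex.exp (Complex.I * (Real.log (‖z.2‖ ^ 2) : ℂ))‖ = 1 := by
    rw [Complex.norm_exp]
    simp [Complex.mul_re]
  rw [habs] at h2; norm_num at h2

theorem phiT_fibers (μ : ℝ) (hμ : 1 < μ) (z z' : ℂ × ℂ)
    (hz : z ∈ OmegaT) (hz' : z' ∈ OmegaT) (h : phiT μ z = phiT μ z') :
    ∃ k : ℤ, z'.1 = Complex.exp (2 * (Real.pi : ℂ) * (μ : ℂ) * (k : ℂ) * Complex.I) * z.1 ∧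
      z'.2 = Complex.exp ((Real.pi : ℂ) * (μ : ℂ) * (k : ℂ)) * z.2 := by
  have hz1 : z.1 ≠ 0 := fst_ne_zero_of_mem hz
  have hz1' : z'.1 ≠ 0 := fst_ne_zero_of_mem hz'
  have hμ0 : (μ : ℂ) ≠ 0 := by
    simp only [ne_eq, Complex.ofReal_eq_zero]; linarith
  rw [Prod.ext_iff] at h
  obtain ⟨h1, h2⟩ := h
  simp only [phiT] at h1 h2
  set L := logT ‖z.2‖ z.1 with hLdef
  set L' := logT ‖z'.2‖ z'.1 with hL'def
  rw [Complex.exp_eq_exp_iff_exists_int] at h1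
  obtain ⟨n, hn⟩ := h1
  have hn2 : L = L' + (n : ℂ) * (2 * (Real.pi : ℂ) * Complex.I) * (μ : ℂ) := by
    field_simp at hn
    linear_combination hn
  refine ⟨-n, ?_, ?_⟩
  · have hL' : L' = 2 * (Real.pi : ℂ) * (μ : ℂ) * ((-n : ℤ) : ℂ) * Complex.I + L := by
      push_cast
      linear_combination -hn2
    calc z'.1 = Complex.exp L' := (exp_logT hz1').symm
      _ = Complex.exp (2 * (Real.pi : ℂ) * (μ : ℂ) * ((-n : ℤ) : ℂ) * Complex.I + L) := by rw [← hL']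
      _ = Complex.exp (2 * (Real.pi : ℂ) * (μ : ℂ) * ((-n : ℤ) : ℂ) * Complex.I) * Complex.exp L := Complex.exp_add _ _
      _ = _ := by rw [exp_logT hz1]
  · have hE : Complex.exp (((Real.pi : ℂ) + Complex.I * L) / 2)
        = Complex.exp ((Real.pi : ℂ) * (μ : ℂ) * ((-n : ℤ) : ℂ)) * Complex.exp (((Real.pi : ℂ) + Complex.I * L') / 2) := by
      rw [← Complex.exp_add]
      congr 1
      push_cast
      linear_combination (Complex.I / 2) * hn2 + ((Real.pi : ℂ) * (μ : ℂ) * (n : ℂ)) * Complex.I_mul_I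
    apply mul_right_cancel₀ (Complex.exp_ne_zero (((Real.pi : ℂ) + Complex.I * L') / 2))
    linear_combination z.2 * hE - h2
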